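/- Let m and e be integers with e ≥ 0, and let t ∈ ℂ with |t| < 1. Then Σ_{n=0}^{∞} I_Δ(m-n, e) · (t·u^{-e})^n / (q;q)_n converges absolutely and equals u^{-m·e} · ((q^{e+1};q)_∞ / ((q;q)_∞ · (t;q)_∞)) · Σ_{k=0}^{∞} ((t;q)_k / ((q^{e+1};q)_k · (q;q)_k)) · (-1)^k · q^{k(k-1)/2 + (1-m)k}, i.e., equals q^{-me/2}·((q^{e+1};q)_∞/((q;q)_∞(t;q)_∞)) times the basic hypergeometric series ₁φ₁(t; q^{e+1}; q, q^{1-m}). -/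

import Mathlib

open scoped BigOperators

/-- Finite q-Pochhammer symbol `(a;q)_n = ∏_{i=0}^{n-1} (1 - a q^i)`. -/
noncomputable def qPoch (a q : ℂ) (n : ℕ) : ℂ :=
  ∏ i ∈ Finset.range n, (1 - a * q ^ i)

/-- Infinite q-Pochhammer symbol `(a;q)_∞ = ∏_{i=0}^{∞} (1 - a q^i)`. -/
noncomputable def qPochInf (a q : ℂ) : ℂ :=
  ∏' i : ℕ, (1 - a * q ^ i)

/-- The `n`-th term of the series defining the tetrahedral index `I_Δ(m,e)`,
with `q = u^2` and vanishing below `e₊ = max(-e,0)`. -/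
noncomputable def tetTerm (u : ℂ) (m e : ℤ) (n : ℕ) : ℂ :=
  if (-e).toNat ≤ n then
    (-1 : ℂ) ^ n * u ^ ((n : ℤ) * ((n : ℤ) + 1) - (2 * (n : ℤ) + e) * m) /
      (qPoch (u ^ 2) (u ^ 2) n * qPoch (u ^ 2) (u ^ 2) ((n : ℤ) + e).toNat)
  else 0

/-- The tetrahedral index `I_Δ(m,e) = Σ_{n=e₊}^∞ (-1)^n u^{n(n+1)-(2n+e)m}/((q;q)_n (q;q)_{n+e})`. -/
noncomputable def tetIndex (u : ℂ) (m e : ℤ) : ℂ := ∑' n : ℕ, tetTerm u m e n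

set_option maxHeartbeats 1000000

section basics
variable {a q : ℂ}

lemma qPoch_succ (a q : ℂ) (n : ℕ) : qPoch a q (n + 1) = qPoch a q n * (1 - a * q ^ n) :=
  Finset.prod_range_succ _ _

lemma norm_factor_lt (ha : ‖a‖ < 1) (hq1 : ‖q‖ < 1) (i : ℕ) : ‖a * q ^ i‖ < 1 := by
  rw [norm_mul, norm_pow]
  calc ‖a‖ * ‖q‖ ^ i ≤ ‖a‖ * 1 := by
        gcongr
        exact pow_le_one₀ (norm_nonneg q) hq1.le
    _ < 1 := by simpa using ha

lemma factor_ne_zero (ha : ‖a‖ < 1) (hq1 : ‖q‖ < 1) (i : ℕ) : 1 - a * q ^ i ≠ 0 := by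
  intro h
  have h1 : a * q ^ i = 1 := by linear_combination -h
  have := norm_factor_lt ha hq1 i
  rw [h1] at this
  simp at this

lemma qPoch_ne_zero (ha : ‖a‖ < 1) (hq1 : ‖q‖ < 1) (n : ℕ) : qPoch a q n ≠ 0 :=
  Finset.prod_ne_zero_iff.2 fun i _ => factor_ne_zero ha hq1 i

lemma summable_log (ha : ‖a‖ < 1) (hq1 : ‖q‖ < 1) :
    Summable (fun i : ℕ => Complex.log (1 - a * q ^ i)) := by
  apply Summable.of_norm_bounded_eventually_nat (g := fun i => 3 / 2 * (‖a‖ * ‖q‖ ^ i))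
  · exact ((summable_geometric_of_lt_one (norm_nonneg q) hq1).mul_left ‖a‖).mul_left _
  · have h0 : Filter.Tendsto (fun i : ℕ => ‖a‖ * ‖q‖ ^ i) Filter.atTop (nhds 0) := by
      simpa using (tendsto_pow_atTop_nhds_zero_of_lt_one (norm_nonneg q) hq1).const_mul ‖a‖
    filter_upwards [h0.eventually_le_const (by norm_num : (0:ℝ) < 1/2)] with i hi
    have : ‖-(a * q ^ i)‖ ≤ 1 / 2 := by
      rw [norm_neg, norm_mul, norm_pow]; exact hi
    have := Complex.norm_log_one_add_half_le_self this
    rw [show (1 : ℂ) + -(a * q ^ i) = 1 - a * q ^ i by ring] at this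
    simpa [norm_mul, norm_pow] using this

lemma multipliable_qPochInf (ha : ‖a‖ < 1) (hq1 : ‖q‖ < 1) :
    Multipliable (fun i : ℕ => 1 - a * q ^ i) := by
  exact Complex.multipliable_of_summable_log (summable_log ha hq1)

lemma qPochInf_ne_zero (ha : ‖a‖ < 1) (hq1 : ‖q‖ < 1) : qPochInf a q ≠ 0 := by
  have := Complex.cexp_tsum_eq_tprod (f := fun i => 1 - a * q ^ i)
    (fun i => factor_ne_zero ha hq1 i) (summable_log ha hq1)
  rw [qPochInf, ← this]
  exact Complex.exp_ne_zero _

lemma qPochInf_split (ha : ‖a‖ < 1) (hq1 : ‖q‖ < 1) (k : ℕ) :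
    qPochInf a q = qPoch a q k * qPochInf (a * q ^ k) q := by
  have key : Multipliable (fun i : ℕ => 1 - a * q ^ (i + k)) := by
    have := multipliable_qPochInf (a := a * q ^ k) (q := q)
      ((norm_factor_lt ha hq1 k)) hq1
    refine this.congr fun i => ?_
    rw [pow_add, mul_comm (q ^ i)]
    ring
  have := Multipliable.prod_mul_tprod_nat_mul' (f := fun i : ℕ => 1 - a * q ^ i) (k := k) key
  rw [qPochInf, ← this, qPoch, qPochInf]
  congr 1
  refine tprod_congr fun i => ?_
  show 1 - a * q ^ (i + k) = 1 - a * q ^ k * q ^ i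
  rw [pow_add, mul_comm (q ^ i)]
  ring

end basics

section lowerbound

lemma one_sub_sum_le_prod (x : ℕ → ℝ) (h0 : ∀ i, 0 ≤ x i) (h1 : ∀ i, x i ≤ 1) (s : Finset ℕ) :
    1 - ∑ i ∈ s, x i ≤ ∏ i ∈ s, (1 - x i) := by
  induction s using Finset.cons_induction with
  | empty => simp
  | cons a s ha ih =>
    rw [Finset.prod_cons, Finset.sum_cons]
    have hp0 : 0 ≤ ∏ i ∈ s, (1 - x i) := Finset.prod_nonneg fun i _ => by linarith [h1 i]
    have hs0 : 0 ≤ ∑ i ∈ s, x i := Finset.sum_nonneg fun i _ => h0 i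
    nlinarith [h0 a, h1 a, mul_le_mul_of_nonneg_left ih (by linarith [h1 a] : (0:ℝ) ≤ 1 - x a)]

lemma exists_qPoch_lb (q : ℂ) (hq1 : ‖q‖ < 1) :
    ∃ C : ℝ, 0 < C ∧ ∀ n, C ≤ ‖qPoch q q n‖ := by
  set r := ‖q‖ with hr
  have hr0 : 0 ≤ r := norm_nonneg q
  have hfac0 : ∀ i : ℕ, 0 ≤ 1 - r ^ (i + 1) := by
    intro i
    have : r ^ (i + 1) ≤ 1 := pow_le_one₀ hr0 hq1.le
    linarith
  have hfac1 : ∀ i : ℕ, 1 - r ^ (i + 1) ≤ 1 := by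
    intro i
    have : 0 ≤ r ^ (i + 1) := pow_nonneg hr0 _
    linarith
  obtain ⟨N, hN⟩ := ((tendsto_pow_atTop_nhds_zero_of_lt_one hr0 hq1).eventually_le_const
    (by linarith : (0:ℝ) < (1 - r) / 2)).exists
  set P := ∏ i ∈ Finset.range N, (1 - r ^ (i + 1)) with hP
  have hPpos : 0 < P := Finset.prod_pos fun i _ => by
    have : r ^ (i + 1) < 1 := pow_lt_one₀ hr0 hq1 (by omega)
    linarith
  have anti : Antitone (fun k => ∏ i ∈ Finset.range k, (1 - r ^ (i + 1))) := by
    apply antitone_nat_of_succ_le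
    intro k
    rw [Finset.prod_range_succ]
    have h0 : 0 ≤ ∏ i ∈ Finset.range k, (1 - r ^ (i + 1)) :=
      Finset.prod_nonneg fun i _ => hfac0 i
    nlinarith [hfac1 k, hfac0 k]
  refine ⟨P * (1 / 2), by positivity, fun n => ?_⟩
  have key : P * (1 / 2) ≤ ∏ i ∈ Finset.range n, (1 - r ^ (i + 1)) := by
    rcases le_or_gt n N with h | h
    · calc P * (1 / 2) ≤ P * 1 := by nlinarith
        _ = P := mul_one P
        _ ≤ _ := anti h
    · have hsplit : (∏ i ∈ Finset.range n, (1 - r ^ (i + 1))) =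
          P * ∏ i ∈ Finset.Ico N n, (1 - r ^ (i + 1)) := by
        rw [hP, ← Finset.prod_range_mul_prod_Ico _ h.le]
      rw [hsplit]
      have htail : (1:ℝ) / 2 ≤ ∏ i ∈ Finset.Ico N n, (1 - r ^ (i + 1)) := by
        have hW := one_sub_sum_le_prod (fun i => r ^ (i + 1)) (fun i => pow_nonneg hr0 _)
          (fun i => pow_le_one₀ hr0 hq1.le) (Finset.Ico N n)
        have hsum : ∑ i ∈ Finset.Ico N n, r ^ (i + 1) ≤ 1 / 2 := by
          have hgs : Summable (fun j : ℕ => r ^ (N + j + 1)) := by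
            apply Summable.congr ((summable_geometric_of_lt_one hr0 hq1).mul_left (r ^ (N + 1)))
            intro j
            rw [← pow_add]
            congr 1
            omega
          have h1 : ∑ i ∈ Finset.Ico N n, r ^ (i + 1) ≤ ∑' j : ℕ, r ^ (N + j + 1) := by
            rw [Finset.sum_Ico_eq_sum_range]
            exact Summable.sum_le_tsum _ (fun j _ => by positivity) hgs
          have h2 : ∑' j : ℕ, r ^ (N + j + 1) = r ^ (N + 1) * (1 - r)⁻¹ := by
            calc ∑' j : ℕ, r ^ (N + j + 1) = ∑' j : ℕ, r ^ (N + 1) * r ^ j := by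
                  refine tsum_congr fun j => ?_
                  rw [← pow_add]
                  congr 1
                  omega
              _ = r ^ (N + 1) * ∑' j : ℕ, r ^ j := tsum_mul_left
              _ = r ^ (N + 1) * (1 - r)⁻¹ := by rw [tsum_geometric_of_lt_one hr0 hq1]
          have h3 : r ^ (N + 1) * (1 - r)⁻¹ ≤ 1 / 2 := by
            have hrn : r ^ (N + 1) ≤ (1 - r) / 2 := by
              calc r ^ (N + 1) ≤ r ^ N := pow_le_pow_of_le_one hr0 hq1.le (Nat.le_succ N)
                _ ≤ (1 - r) / 2 := hN
            have hr1 : (0:ℝ) < 1 - r := by linarith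
            calc r ^ (N + 1) * (1 - r)⁻¹ ≤ ((1 - r) / 2) * (1 - r)⁻¹ := by
                  apply mul_le_mul_of_nonneg_right hrn
                  positivity
              _ = 1 / 2 := by field_simp
          linarith
        linarith
      nlinarith [htail, hPpos]
  calc P * (1/2) ≤ ∏ i ∈ Finset.range n, (1 - r ^ (i + 1)) := key
    _ ≤ ∏ i ∈ Finset.range n, ‖1 - q * q ^ i‖ := by
        apply Finset.prod_le_prod
        · intro i _; exact hfac0 i
        · intro i _
          calc 1 - r ^ (i + 1) = ‖(1:ℂ)‖ - ‖q * q ^ i‖ := by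
                rw [norm_mul, norm_pow, norm_one, ← hr, pow_succ]
                ring
            _ ≤ ‖1 - q * q ^ i‖ := norm_sub_norm_le _ _
    _ = ‖qPoch q q n‖ := by rw [qPoch, norm_prod]

end lowerbound

section euler
open Filter Topology

lemma summable_qExp_norm {q : ℂ} (hq1 : ‖q‖ < 1) {z : ℂ} (hz : ‖z‖ < 1) :
    Summable (fun n : ℕ => ‖z ^ n / qPoch q q n‖) := by
  obtain ⟨C, hC, hCn⟩ := exists_qPoch_lb q hq1
  apply Summable.of_nonneg_of_le (fun n => norm_nonneg _) (fun n => ?_)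
    ((summable_geometric_of_lt_one (norm_nonneg z) hz).mul_right C⁻¹)
  rw [norm_div, norm_pow, div_eq_mul_inv]
  exact mul_le_mul_of_nonneg_left (inv_anti₀ hC (hCn n)) (pow_nonneg (norm_nonneg z) n)

lemma summable_qExp {q : ℂ} (hq1 : ‖q‖ < 1) {z : ℂ} (hz : ‖z‖ < 1) :
    Summable (fun n : ℕ => z ^ n / qPoch q q n) :=
  (summable_qExp_norm hq1 hz).of_norm

lemma qExp_funEq {q : ℂ} (hq1 : ‖q‖ < 1) {z : ℂ} (hz : ‖z‖ < 1) :
    (1 - z) * ∑' n : ℕ, z ^ n / qPoch q q n = ∑' n : ℕ, (q * z) ^ n / qPoch q q n := by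
  have hqz : ‖q * z‖ < 1 := by
    rw [norm_mul]
    calc ‖q‖ * ‖z‖ ≤ 1 * ‖z‖ := mul_le_mul_of_nonneg_right hq1.le (norm_nonneg z)
      _ < 1 := by simpa using hz
  have S1 := summable_qExp hq1 hz
  have S2 := summable_qExp hq1 hqz
  set g : ℕ → ℂ := fun n => z ^ n / qPoch q q n - (q * z) ^ n / qPoch q q n with hg
  have hgsum : Summable g := S1.sub S2
  have h1 : ∑' n, g n = (∑' n : ℕ, z ^ n / qPoch q q n) - ∑' n : ℕ, (q * z) ^ n / qPoch q q n :=
    Summable.tsum_sub S1 S2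
  have h2 : ∑' n, g n = z * ∑' n : ℕ, z ^ n / qPoch q q n := by
    rw [Summable.tsum_eq_zero_add hgsum]
    have hg0 : g 0 = 0 := by simp [hg]
    have hgs : ∀ n : ℕ, g (n + 1) = z * (z ^ n / qPoch q q n) := by
      intro n
      have hPn : qPoch q q n ≠ 0 := qPoch_ne_zero hq1 hq1 n
      have hfac : (1 : ℂ) - q * q ^ n ≠ 0 := factor_ne_zero hq1 hq1 n
      rw [hg]
      simp only
      rw [qPoch_succ]
      field_simp
      ring
    rw [hg0, zero_add]
    calc ∑' n : ℕ, g (n + 1) = ∑' n : ℕ, z * (z ^ n / qPoch q q n) := tsum_congr hgs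
      _ = z * ∑' n : ℕ, z ^ n / qPoch q q n := tsum_mul_left
  rw [h2] at h1
  linear_combination -h1

lemma qExp_iter {q : ℂ} (hq1 : ‖q‖ < 1) {z : ℂ} (hz : ‖z‖ < 1) (N : ℕ) :
    qPoch z q N * ∑' n : ℕ, z ^ n / qPoch q q n =
      ∑' n : ℕ, (q ^ N * z) ^ n / qPoch q q n := by
  induction N with
  | zero => simp [qPoch]
  | succ N ih =>
    have hzN : ‖q ^ N * z‖ < 1 := by
      rw [norm_mul, norm_pow]
      calc ‖q‖ ^ N * ‖z‖ ≤ 1 * ‖z‖ := by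
            gcongr
            exact pow_le_one₀ (norm_nonneg q) hq1.le
        _ < 1 := by simpa using hz
    have hfe := qExp_funEq hq1 hzN
    rw [qPoch_succ]
    calc qPoch z q N * (1 - z * q ^ N) * ∑' n : ℕ, z ^ n / qPoch q q n
        = (1 - q ^ N * z) * (qPoch z q N * ∑' n : ℕ, z ^ n / qPoch q q n) := by ring
      _ = (1 - q ^ N * z) * ∑' n : ℕ, (q ^ N * z) ^ n / qPoch q q n := by rw [ih]
      _ = ∑' n : ℕ, (q * (q ^ N * z)) ^ n / qPoch q q n := hfe
      _ = ∑' n : ℕ, (q ^ (N + 1) * z) ^ n / qPoch q q n := by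
          refine tsum_congr fun n => ?_
          rw [show q * (q ^ N * z) = q ^ (N + 1) * z by rw [pow_succ]; ring]

lemma euler {q : ℂ} (hq1 : ‖q‖ < 1) {z : ℂ} (hz : ‖z‖ < 1) :
    qPochInf z q * ∑' n : ℕ, z ^ n / qPoch q q n = 1 := by
  obtain ⟨C, hC, hCn⟩ := exists_qPoch_lb q hq1
  set F : ℂ → ℂ := fun w => ∑' n : ℕ, w ^ n / qPoch q q n with hF
  have hFbound : ∀ w : ℂ, ‖w‖ ≤ ‖z‖ → ‖F w - 1‖ ≤ ‖w‖ * (C⁻¹ * (1 - ‖z‖)⁻¹) := by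
    intro w hw
    have hw1 : ‖w‖ < 1 := lt_of_le_of_lt hw hz
    have hs := summable_qExp hq1 hw1
    have hsn := summable_qExp_norm hq1 hw1
    have hs1 : Summable (fun n : ℕ => w ^ (n + 1) / qPoch q q (n + 1)) :=
      (summable_nat_add_iff (f := fun n : ℕ => w ^ n / qPoch q q n) 1).2 hs
    have hsn1 : Summable (fun n : ℕ => ‖w ^ (n + 1) / qPoch q q (n + 1)‖) :=
      (summable_nat_add_iff (f := fun n : ℕ => ‖w ^ n / qPoch q q n‖) 1).2 hsn
    have hF1 : F w - 1 = ∑' n : ℕ, w ^ (n + 1) / qPoch q q (n + 1) := by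
      rw [hF]
      simp only
      rw [Summable.tsum_eq_zero_add hs]
      simp [qPoch]
    rw [hF1]
    have hb : ∀ n : ℕ, ‖w ^ (n + 1) / qPoch q q (n + 1)‖ ≤ ‖w‖ * (‖z‖ ^ n * C⁻¹) := by
      intro n
      rw [norm_div, norm_pow, pow_succ, div_eq_mul_inv, mul_comm (‖w‖ ^ n) ‖w‖, mul_assoc]
      refine mul_le_mul_of_nonneg_left ?_ (norm_nonneg w)
      exact mul_le_mul (pow_le_pow_left₀ (norm_nonneg w) hw n) (inv_anti₀ hC (hCn (n + 1)))
        (by positivity) (by positivity)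
    calc ‖∑' n : ℕ, w ^ (n + 1) / qPoch q q (n + 1)‖
        ≤ ∑' n : ℕ, ‖w ^ (n + 1) / qPoch q q (n + 1)‖ := norm_tsum_le_tsum_norm hsn1
      _ ≤ ∑' n : ℕ, ‖w‖ * (‖z‖ ^ n * C⁻¹) := by
          apply Summable.tsum_le_tsum hb hsn1
          exact (((summable_geometric_of_lt_one (norm_nonneg z) hz).mul_right C⁻¹).mul_left ‖w‖)
      _ = ‖w‖ * ((∑' n : ℕ, ‖z‖ ^ n) * C⁻¹) := by rw [tsum_mul_left, tsum_mul_right]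
      _ = ‖w‖ * (C⁻¹ * (1 - ‖z‖)⁻¹) := by
          rw [tsum_geometric_of_lt_one (norm_nonneg z) hz]
          ring
  have hlim1 : Tendsto (fun N : ℕ => qPoch z q N * F z) atTop (𝓝 (qPochInf z q * F z)) := by
    have := (multipliable_qPochInf hz hq1).hasProd.tendsto_prod_nat
    exact this.mul_const (F z)
  have hlim2 : Tendsto (fun N : ℕ => F (q ^ N * z)) atTop (𝓝 1) := by
    rw [tendsto_iff_norm_sub_tendsto_zero]
    apply squeeze_zero (fun N => norm_nonneg _) (g := fun N => (‖q‖ ^ N * ‖z‖) * (C⁻¹ * (1 - ‖z‖)⁻¹))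
    · intro N
      have : ‖q ^ N * z‖ ≤ ‖z‖ := by
        rw [norm_mul, norm_pow]
        calc ‖q‖ ^ N * ‖z‖ ≤ 1 * ‖z‖ := by
              gcongr
              exact pow_le_one₀ (norm_nonneg q) hq1.le
          _ = ‖z‖ := one_mul _
      have := hFbound (q ^ N * z) this
      rwa [norm_mul, norm_pow] at this
    · have h0 : Tendsto (fun N : ℕ => ‖q‖ ^ N) atTop (𝓝 0) :=
        tendsto_pow_atTop_nhds_zero_of_lt_one (norm_nonneg q) hq1
      have := (h0.mul_const ‖z‖).mul_const (C⁻¹ * (1 - ‖z‖)⁻¹)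
      simpa using this
  have heq : (fun N : ℕ => qPoch z q N * F z) = fun N : ℕ => F (q ^ N * z) :=
    funext fun N => qExp_iter hq1 hz N
  rw [heq] at hlim1
  exact tendsto_nhds_unique hlim1 hlim2

end euler

lemma summable_quad {ρ : ℝ} (h0 : 0 < ρ) (h1 : ρ < 1) (b c : ℤ) :
    Summable (fun j : ℕ => ρ ^ ((j : ℤ) * j + b * j + c)) := by
  set B : ℤ := (b.natAbs : ℤ) with hB
  set D : ℤ := (B + 1) ^ 2 - c with hD
  have hle : ∀ j : ℕ, (j : ℤ) - D ≤ (j : ℤ) * j + b * j + c := by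
    intro j
    have f1 : (0:ℤ) ≤ B + 1 - (b - 1) := by omega
    have f2 : (0:ℤ) ≤ B + 1 + (b - 1) := by omega
    have hj : (0:ℤ) ≤ (j : ℤ) := Int.natCast_nonneg j
    rw [hD]
    nlinarith [sq_nonneg (2 * (j : ℤ) + b - 1), mul_nonneg f1 f2]
  apply Summable.of_nonneg_of_le (fun j => (zpow_pos h0 _).le)
    (fun j => ?_) ((summable_geometric_of_lt_one h0.le h1).mul_right (ρ ^ (-D)))
  calc ρ ^ ((j : ℤ) * j + b * j + c) ≤ ρ ^ ((j : ℤ) - D) :=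
        zpow_le_zpow_right_of_le_one₀ h0 h1.le (hle j)
    _ = ρ ^ j * ρ ^ (-D) := by
        rw [sub_eq_add_neg, zpow_add₀ h0.ne', zpow_natCast]

/-- for `e ≥ 0` and `|t| < 1`,
`Σ_{n≥0} I_Δ(m-n,e) (t q^{-e/2})^n/(q;q)_n
  = q^{-me/2} ((q^{e+1};q)_∞/((q;q)_∞ (t;q)_∞)) ₁φ₁(t; q^{e+1}; q, q^{1-m})`,
with absolute convergence; here `u = q^{1/2}`. -/
theorem stmt_12 (u : ℂ) (hu0 : 0 < ‖u‖) (hu1 : ‖u‖ < 1) (q : ℂ) (hq : q = u ^ 2)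
    (m e : ℤ) (he : 0 ≤ e) (t : ℂ) (ht : ‖t‖ < 1) :
    Summable (fun n : ℕ =>
      ‖tetIndex u (m - n) e * (t * u ^ (-e)) ^ n / qPoch q q n‖) ∧
    ∑' n : ℕ, tetIndex u (m - n) e * (t * u ^ (-e)) ^ n / qPoch q q n =
      u ^ (-(m * e)) * (qPochInf (q ^ (e + 1)) q / (qPochInf q q * qPochInf t q)) *
        ∑' k : ℕ, qPoch t q k / (qPoch (q ^ (e + 1)) q k * qPoch q q k) *
          ((-1 : ℂ) ^ k * q ^ (((k * (k - 1) / 2 : ℕ) : ℤ) + (1 - m) * k)) := by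
  have hu : u ≠ 0 := norm_pos_iff.mp hu0
  have hq0 : q ≠ 0 := by rw [hq]; exact pow_ne_zero 2 hu
  have hq1 : ‖q‖ < 1 := by
    rw [hq, norm_pow]
    nlinarith [hu0, hu1]
  have hq2 : q = u ^ (2 : ℤ) := by rw [hq, ← zpow_natCast u 2]; norm_num
  have hzu : ∀ k : ℤ, q ^ k = u ^ (2 * k) := fun k => by rw [hq2, ← zpow_mul]
  obtain ⟨C, hC, hCn⟩ := exists_qPoch_lb q hq1
  set en : ℕ := e.toNat with hen
  have hqe : q ^ (e + 1) = q ^ (en + 1 : ℕ) := by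
    rw [show e + 1 = ((en + 1 : ℕ) : ℤ) by omega, zpow_natCast]
  have hqe1 : ‖q ^ (e + 1)‖ < 1 := by
    rw [hqe, norm_pow]
    calc ‖q‖ ^ (en + 1) ≤ ‖q‖ := pow_le_of_le_one (norm_nonneg q) hq1.le (Nat.succ_ne_zero en)
      _ < 1 := hq1
  have htq1 : ∀ j : ℕ, ‖t * q ^ j‖ < 1 := by
    intro j
    rw [norm_mul, norm_pow]
    calc ‖t‖ * ‖q‖ ^ j ≤ ‖t‖ * 1 :=
          mul_le_mul_of_nonneg_left (pow_le_one₀ (norm_nonneg q) hq1.le) (norm_nonneg t)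
      _ < 1 := by simpa using ht
  -- the tetTerm formula under e ≥ 0
  have htet : ∀ (m' : ℤ) (j : ℕ), tetTerm u m' e j =
      (-1 : ℂ) ^ j * u ^ ((j : ℤ) * ((j : ℤ) + 1) - (2 * (j : ℤ) + e) * m') /
        (qPoch q q j * qPoch q q (j + en)) := by
    intro m' j
    have h1 : ((j : ℤ) + e).toNat = j + en := by omega
    rw [tetTerm, if_pos (show (-e).toNat ≤ j by omega), h1, ← hq]
  -- coefficients
  set c : ℕ → ℂ := fun j =>
    (-1 : ℂ) ^ j * u ^ ((j : ℤ) * ((j : ℤ) + 1) - (2 * (j : ℤ) + e) * m) /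
      (qPoch q q j * qPoch q q (j + en)) with hc
  -- step 1: pointwise identity
  have hA : ∀ n j : ℕ, tetTerm u (m - n) e j * (t * u ^ (-e)) ^ n =
      c j * (t * q ^ j) ^ n := by
    intro n j
    rw [htet (m - n) j, hc]
    simp only
    rw [mul_pow, mul_pow]
    have e1 : (u ^ (-e)) ^ n = u ^ (-e * n) := by
      rw [← zpow_natCast (u ^ (-e)) n, ← zpow_mul]
    have e2 : (q ^ j) ^ n = u ^ (2 * (j : ℤ) * n) := by
      rw [← pow_mul, ← zpow_natCast q (j * n), hzu]
      congr 1
      push_cast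
      ring
    have e3 : u ^ ((j : ℤ) * ((j : ℤ) + 1) - (2 * (j : ℤ) + e) * (m - n)) * u ^ (-e * n) =
        u ^ ((j : ℤ) * ((j : ℤ) + 1) - (2 * (j : ℤ) + e) * m) * u ^ (2 * (j : ℤ) * n) := by
      rw [← zpow_add₀ hu, ← zpow_add₀ hu]
      congr 1
      ring
    rw [e1, e2, div_mul_eq_mul_div, div_mul_eq_mul_div]
    congr 1
    calc (-1 : ℂ) ^ j * u ^ ((j : ℤ) * ((j : ℤ) + 1) - (2 * (j : ℤ) + e) * (m - n)) *
          (t ^ n * u ^ (-e * n))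
        = u ^ ((j : ℤ) * ((j : ℤ) + 1) - (2 * (j : ℤ) + e) * (m - n)) * u ^ (-e * n) *
            ((-1 : ℂ) ^ j * t ^ n) := by ring
      _ = u ^ ((j : ℤ) * ((j : ℤ) + 1) - (2 * (j : ℤ) + e) * m) * u ^ (2 * (j : ℤ) * n) *
            ((-1 : ℂ) ^ j * t ^ n) := by rw [e3]
      _ = (-1 : ℂ) ^ j * u ^ ((j : ℤ) * ((j : ℤ) + 1) - (2 * (j : ℤ) + e) * m) *
            (t ^ n * u ^ (2 * (j : ℤ) * n)) := by ring
  -- norm bounds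
  set r : ℝ := ‖u‖ with hr
  have hr0 : 0 < r := hu0
  have hr1 : r < 1 := hu1
  set g : ℕ → ℝ := fun j => r ^ ((j : ℤ) * j + (1 - 2 * m) * j + -(e * m)) with hg
  have hgpos : ∀ j, 0 ≤ g j := fun j => (zpow_pos hr0 _).le
  have hgsum : Summable g := summable_quad hr0 hr1 (1 - 2 * m) (-(e * m))
  have hcnorm : ∀ j, ‖c j‖ ≤ g j * (C⁻¹ * C⁻¹) := by
    intro j
    rw [hc]
    simp only
    rw [norm_div, norm_mul, norm_pow, norm_neg, norm_one, one_pow, one_mul, norm_zpow, norm_mul]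
    have hE : (j : ℤ) * ((j : ℤ) + 1) - (2 * (j : ℤ) + e) * m =
        (j : ℤ) * j + (1 - 2 * m) * j + -(e * m) := by ring
    rw [hE, div_eq_mul_inv, mul_inv]
    exact mul_le_mul_of_nonneg_left
      (mul_le_mul (inv_anti₀ hC (hCn j)) (inv_anti₀ hC (hCn (j + en)))
        (by positivity) (by positivity))
      (zpow_nonneg (norm_nonneg u) _)
  have htq_le : ∀ j : ℕ, ‖t * q ^ j‖ ≤ ‖t‖ := by
    intro j
    rw [norm_mul, norm_pow]
    calc ‖t‖ * ‖q‖ ^ j ≤ ‖t‖ * 1 :=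
          mul_le_mul_of_nonneg_left (pow_le_one₀ (norm_nonneg q) hq1.le) (norm_nonneg t)
      _ = ‖t‖ := mul_one _
  have htqn : ∀ (j n : ℕ), ‖(t * q ^ j) ^ n‖ ≤ ‖t‖ ^ n := by
    intro j n
    rw [norm_pow]
    exact pow_le_pow_left₀ (norm_nonneg _) (htq_le j) n
  set K : ℝ := C⁻¹ * C⁻¹ * C⁻¹ with hK
  have hK0 : 0 ≤ K := by positivity
  have hBb : ∀ (j n : ℕ), ‖c j * (t * q ^ j) ^ n / qPoch q q n‖ ≤ g j * ‖t‖ ^ n * K := by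
    intro j n
    calc ‖c j * (t * q ^ j) ^ n / qPoch q q n‖
        = ‖c j‖ * ‖(t * q ^ j) ^ n‖ * ‖qPoch q q n‖⁻¹ := by
          rw [norm_div, div_eq_mul_inv, norm_mul]
      _ ≤ g j * (C⁻¹ * C⁻¹) * ‖t‖ ^ n * C⁻¹ := by
          refine mul_le_mul (mul_le_mul (hcnorm j) (htqn j n) (norm_nonneg _) ?_)
            (inv_anti₀ hC (hCn n)) (by positivity) (by positivity)
          positivity
      _ = g j * ‖t‖ ^ n * K := by rw [hK]; ring
  -- summability of the double family
  have hBnorm : Summable (fun p : ℕ × ℕ => ‖c p.1 * (t * q ^ p.1) ^ p.2 / qPoch q q p.2‖) := by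
    have h1 : Summable (fun p : ℕ × ℕ => g p.1 * ‖t‖ ^ p.2) :=
      hgsum.mul_of_nonneg (summable_geometric_of_lt_one (norm_nonneg t) ht) hgpos
        (fun n => pow_nonneg (norm_nonneg t) n)
    exact Summable.of_nonneg_of_le (fun p => norm_nonneg _) (fun p => hBb p.1 p.2)
      (h1.mul_right K)
  have hB : Summable (fun p : ℕ × ℕ => c p.1 * (t * q ^ p.1) ^ p.2 / qPoch q q p.2) :=
    hBnorm.of_norm
  have hsec : ∀ n : ℕ, Summable (fun j : ℕ => ‖c j * (t * q ^ j) ^ n / qPoch q q n‖) := by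
    intro n
    apply Summable.of_nonneg_of_le (fun j => norm_nonneg _) (fun j => hBb j n)
    exact (hgsum.mul_right _).mul_right _
  -- row identity
  have hrow : ∀ n : ℕ, tetIndex u (m - n) e * (t * u ^ (-e)) ^ n / qPoch q q n =
      ∑' j : ℕ, c j * (t * q ^ j) ^ n / qPoch q q n := by
    intro n
    rw [tetIndex, ← tsum_mul_right, ← tsum_div_const]
    exact tsum_congr fun j => by rw [hA n j]
  -- column identity via Euler
  have hcol : ∀ j : ℕ, (∑' n : ℕ, c j * (t * q ^ j) ^ n / qPoch q q n) =
      c j * (qPochInf (t * q ^ j) q)⁻¹ := by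
    intro j
    have h1 : (∑' n : ℕ, c j * (t * q ^ j) ^ n / qPoch q q n) =
        c j * ∑' n : ℕ, (t * q ^ j) ^ n / qPoch q q n := by
      rw [← tsum_mul_left]
      exact tsum_congr fun n => by rw [mul_div_assoc]
    rw [h1]
    exact congrArg _ (eq_inv_of_mul_eq_one_left (by rw [mul_comm]; exact euler hq1 (htq1 j)))
  -- non-vanishing facts
  have hPq : ∀ k : ℕ, qPoch q q k ≠ 0 := qPoch_ne_zero hq1 hq1
  have hPt : ∀ k : ℕ, qPoch t q k ≠ 0 := qPoch_ne_zero ht hq1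
  have hPe : ∀ k : ℕ, qPoch (q ^ (e + 1)) q k ≠ 0 := qPoch_ne_zero hqe1 hq1
  have hIt : qPochInf t q ≠ 0 := qPochInf_ne_zero ht hq1
  have hIq : qPochInf q q ≠ 0 := qPochInf_ne_zero hq1 hq1
  have hIe : qPochInf (q ^ (e + 1)) q ≠ 0 := qPochInf_ne_zero hqe1 hq1
  have hItq : ∀ j : ℕ, qPochInf (t * q ^ j) q ≠ 0 := fun j => qPochInf_ne_zero (htq1 j) hq1
  -- product splittings
  have hsplit_t : ∀ j : ℕ, qPochInf t q = qPoch t q j * qPochInf (t * q ^ j) q :=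
    fun j => qPochInf_split ht hq1 j
  have harg : q * q ^ en = q ^ (e + 1) := by rw [hqe, pow_succ]; ring
  have hsplit_q : qPochInf q q = qPoch q q en * qPochInf (q ^ (e + 1)) q := by
    have h0 := qPochInf_split hq1 hq1 en
    rwa [harg] at h0
  have hpoch_split : ∀ j : ℕ,
      qPoch q q (j + en) = qPoch q q en * qPoch (q ^ (e + 1)) q j := by
    intro j
    rw [qPoch, add_comm j en, Finset.prod_range_add]
    congr 1
    refine Finset.prod_congr rfl fun i _ => ?_
    have : q * q ^ (en + i) = q ^ (e + 1) * q ^ i := by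
      rw [hqe, pow_add, pow_succ]
      ring
    rw [this]
  -- u-power identity
  have hupow : ∀ j : ℕ, u ^ ((j : ℤ) * ((j : ℤ) + 1) - (2 * (j : ℤ) + e) * m) =
      u ^ (-(m * e)) * q ^ (((j * (j - 1) / 2 : ℕ) : ℤ) + (1 - m) * (j : ℤ)) := by
    intro j
    rw [hzu, ← zpow_add₀ hu]
    congr 1
    have h2 : ((j * (j - 1) / 2 : ℕ) : ℤ) * 2 = (j : ℤ) * ((j : ℤ) - 1) := by
      rcases Nat.eq_zero_or_pos j with h | h
      · subst h; simp
      · have hnat : (j * (j - 1) / 2) * 2 = j * (j - 1) := by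
          apply Nat.div_mul_cancel
          rcases Nat.even_or_odd j with hj | hj
          · exact (hj.mul_right _).two_dvd
          · exact ((Nat.Odd.sub_odd hj odd_one).mul_left _).two_dvd
        have hc1 : ((j * (j - 1) / 2 : ℕ) : ℤ) * 2 = ((j * (j - 1) : ℕ) : ℤ) := by
          exact_mod_cast hnat
        rw [hc1]
        push_cast [Nat.cast_sub h]
        ring
    linear_combination -h2
  -- the constant
  set K0 : ℂ := u ^ (-(m * e)) * (qPochInf (q ^ (e + 1)) q / (qPochInf q q * qPochInf t q))
    with hK0def
  have hterm : ∀ j : ℕ, c j * (qPochInf (t * q ^ j) q)⁻¹ =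
      K0 * (qPoch t q j / (qPoch (q ^ (e + 1)) q j * qPoch q q j) *
        ((-1 : ℂ) ^ j * q ^ (((j * (j - 1) / 2 : ℕ) : ℤ) + (1 - m) * (j : ℤ)))) := by
    intro j
    have e1 : qPochInf (t * q ^ j) q = qPochInf t q / qPoch t q j := by
      rw [hsplit_t j, mul_comm (qPoch t q j), mul_div_cancel_right₀ _ (hPt j)]
    have e3 : qPoch q q en = qPochInf q q / qPochInf (q ^ (e + 1)) q := by
      rw [hsplit_q, mul_div_cancel_right₀ _ hIe]
    simp only [hc]
    rw [e1, hpoch_split j, e3, hupow j, hK0def]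
    field_simp
  -- assemble
  have hfub : (∑' n : ℕ, ∑' j : ℕ, c j * (t * q ^ j) ^ n / qPoch q q n) =
      ∑' j : ℕ, ∑' n : ℕ, c j * (t * q ^ j) ^ n / qPoch q q n :=
    Summable.tsum_comm hB
  constructor
  · have hbound : ∀ n : ℕ,
        ‖tetIndex u (m - n) e * (t * u ^ (-e)) ^ n / qPoch q q n‖ ≤
          (∑' j, g j) * ‖t‖ ^ n * K := by
      intro n
      rw [hrow n]
      calc ‖∑' j : ℕ, c j * (t * q ^ j) ^ n / qPoch q q n‖
          ≤ ∑' j : ℕ, ‖c j * (t * q ^ j) ^ n / qPoch q q n‖ := norm_tsum_le_tsum_norm (hsec n)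
        _ ≤ ∑' j : ℕ, g j * ‖t‖ ^ n * K :=
            Summable.tsum_le_tsum (fun j => hBb j n) (hsec n) ((hgsum.mul_right _).mul_right _)
        _ = (∑' j, g j) * ‖t‖ ^ n * K := by rw [tsum_mul_right, tsum_mul_right]
    exact Summable.of_nonneg_of_le (fun n => norm_nonneg _) hbound
      (((summable_geometric_of_lt_one (norm_nonneg t) ht).mul_left _).mul_right _)
  · calc ∑' n : ℕ, tetIndex u (m - n) e * (t * u ^ (-e)) ^ n / qPoch q q n
        = ∑' n : ℕ, ∑' j : ℕ, c j * (t * q ^ j) ^ n / qPoch q q n := tsum_congr hrow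
      _ = ∑' j : ℕ, ∑' n : ℕ, c j * (t * q ^ j) ^ n / qPoch q q n := hfub
      _ = ∑' j : ℕ, c j * (qPochInf (t * q ^ j) q)⁻¹ := tsum_congr hcol
      _ = ∑' j : ℕ, K0 * (qPoch t q j / (qPoch (q ^ (e + 1)) q j * qPoch q q j) *
            ((-1 : ℂ) ^ j * q ^ (((j * (j - 1) / 2 : ℕ) : ℤ) + (1 - m) * (j : ℤ)))) :=
          tsum_congr hterm
      _ = K0 * ∑' j : ℕ, qPoch t q j / (qPoch (q ^ (e + 1)) q j * qPoch q q j) *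
            ((-1 : ℂ) ^ j * q ^ (((j * (j - 1) / 2 : ℕ) : ℤ) + (1 - m) * (j : ℤ))) :=
          tsum_mul_left
      _ = _ := rfl
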